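/- Value function convergence: Under the hypotheses of the trajectory-convergence lemma, with r bounded and s ↦ r(s, π(s)) L_r-Lipschitz and γ ∈ (0,1), the discretized value V^π_δt(s) := Σ_{k=0}^∞ γ^{kδt} r(s_δt^k, π(s_δt^k)) δt converges to the continuous value V^π(s) := ∫_0^∞ γ^t r(s_t, π(s_t)) dt as δt → 0, for every initial state s. -/

import Mathlib

open Real Filter MeasureTheory

lemma aux_speed {E : Type*} [NormedAddCommGroup E] [NormedSpace ℝ E]
    {u : ℝ → E} {w : ℝ → E} {M : ℝ}
    (h : ∀ t, 0 ≤ t → HasDerivAt u (w t) t) (hb : ∀ t, 0 ≤ t → ‖w t‖ ≤ M)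
    {t1 t2 : ℝ} (h1 : 0 ≤ t1) (h2 : 0 ≤ t2) :
    ‖u t2 - u t1‖ ≤ M * |t2 - t1| := by
  have := Convex.norm_image_sub_le_of_norm_hasDerivWithin_le
    (f := u) (f' := w) (s := Set.Ici (0:ℝ))
    (fun x hx => (h x hx).hasDerivWithinAt) (fun x hx => hb x hx)
    (convex_Ici 0) (Set.mem_Ici.2 h1) (Set.mem_Ici.2 h2)
  simpa [Real.norm_eq_abs] using this

lemma aux_exp_sub_one_le (x : ℝ) : Real.exp x - 1 ≤ x * Real.exp x := by
  have h1 : -x + 1 ≤ Real.exp (-x) := Real.add_one_le_exp (-x)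
  have h2 : Real.exp x * Real.exp (-x) = 1 := by
    rw [← Real.exp_add]; simp
  nlinarith [Real.exp_pos x]

lemma aux_step {n : ℕ} {A : Type*}
    (F : EuclideanSpace ℝ (Fin n) → A → EuclideanSpace ℝ (Fin n))
    (pol : EuclideanSpace ℝ (Fin n) → A) (K M : ℝ) (hK : 0 < K) (hM : 0 < M)
    (hFbound : ∀ s a, ‖F s a‖ ≤ M)
    (hFlip : ∀ a, LipschitzWith (Real.toNNReal K) (fun s => F s a))
    (hFpollip : LipschitzWith (Real.toNNReal K) (fun s => F s (pol s)))
    (s : ℝ → EuclideanSpace ℝ (Fin n))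
    (hs : ∀ t : ℝ, 0 ≤ t → HasDerivAt s (F (s t) (pol (s t))) t)
    {δt : ℝ} (hδt : 0 < δt) {t0 : ℝ} (ht0 : 0 ≤ t0)
    (u : ℝ → EuclideanSpace ℝ (Fin n)) (y : EuclideanSpace ℝ (Fin n)) (hu0 : u 0 = y)
    (huderiv : ∀ t : ℝ, 0 ≤ t → HasDerivAt u (F (u t) (pol y)) t) :
    ‖s (t0 + δt) - u δt‖ ≤ Real.exp (K * δt) * (‖s t0 - y‖ + 2 * M * K * δt ^ 2) := by
  have hKc : ((Real.toNNReal K : NNReal) : ℝ) = K := Real.coe_toNNReal K hK.le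
  set f : ℝ → EuclideanSpace ℝ (Fin n) := fun t => s (t0 + t) - u t with hf
  have hderiv : ∀ t ∈ Set.Icc (0:ℝ) δt,
      HasDerivAt f (F (s (t0 + t)) (pol (s (t0 + t))) - F (u t) (pol y)) t := by
    intro t ht
    have h1 : HasDerivAt (fun τ => s (t0 + τ)) (F (s (t0 + t)) (pol (s (t0 + t)))) t := by
      have := (hs (t0 + t) (by linarith [ht.1])).scomp t ((hasDerivAt_id t).const_add t0)
      rw [one_smul] at this; exact this
    exact h1.sub (huderiv t ht.1)
  have hu_speed : ∀ t ∈ Set.Icc (0:ℝ) δt, ‖u t - y‖ ≤ M * δt := by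
    intro t ht
    have h2 := aux_speed huderiv (fun τ _ => hFbound _ _) le_rfl ht.1
    rw [hu0] at h2
    calc ‖u t - y‖ ≤ M * |t - 0| := h2
      _ ≤ M * δt := by
          rw [sub_zero, abs_of_nonneg ht.1]
          exact mul_le_mul_of_nonneg_left ht.2 hM.le
  have hbound : ∀ t ∈ Set.Ico (0:ℝ) δt,
      ‖F (s (t0 + t)) (pol (s (t0 + t))) - F (u t) (pol y)‖
        ≤ K * ‖f t‖ + 2 * K * M * δt := by
    intro t ht
    have htI : t ∈ Set.Icc (0:ℝ) δt := ⟨ht.1, ht.2.le⟩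
    have e1 : ‖F (s (t0 + t)) (pol (s (t0 + t))) - F y (pol y)‖ ≤ K * ‖s (t0 + t) - y‖ := by
      have := hFpollip.dist_le_mul (s (t0 + t)) y
      simpa [dist_eq_norm, hKc] using this
    have e2 : ‖F y (pol y) - F (u t) (pol y)‖ ≤ K * ‖y - u t‖ := by
      have := (hFlip (pol y)).dist_le_mul y (u t)
      simpa [dist_eq_norm, hKc] using this
    have e3 : ‖y - u t‖ ≤ M * δt := by rw [norm_sub_rev]; exact hu_speed t htI
    have e4 : ‖s (t0 + t) - y‖ ≤ ‖f t‖ + M * δt := by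
      calc ‖s (t0 + t) - y‖ = ‖f t + (u t - y)‖ := by simp [hf]
        _ ≤ ‖f t‖ + ‖u t - y‖ := norm_add_le _ _
        _ ≤ ‖f t‖ + M * δt := by linarith [hu_speed t htI]
    calc ‖F (s (t0 + t)) (pol (s (t0 + t))) - F (u t) (pol y)‖
        ≤ ‖F (s (t0 + t)) (pol (s (t0 + t))) - F y (pol y)‖
          + ‖F y (pol y) - F (u t) (pol y)‖ := norm_sub_le_norm_sub_add_norm_sub _ _ _
      _ ≤ K * (‖f t‖ + M * δt) + K * (M * δt) := by
          refine add_le_add (e1.trans ?_) (e2.trans ?_)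
          · exact mul_le_mul_of_nonneg_left e4 hK.le
          · exact mul_le_mul_of_nonneg_left e3 hK.le
      _ = K * ‖f t‖ + 2 * K * M * δt := by ring
  have hcont : ContinuousOn f (Set.Icc 0 δt) :=
    fun t ht => ((hderiv t ht).continuousAt).continuousWithinAt
  have ha0 : ‖f 0‖ ≤ ‖s t0 - y‖ := by simp [hf, hu0]
  have hg := norm_le_gronwallBound_of_norm_deriv_right_le hcont
    (fun t ht => (hderiv t ⟨ht.1, ht.2.le⟩).hasDerivWithinAt)
    ha0 hbound δt ⟨hδt.le, le_rfl⟩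
  rw [sub_zero, gronwallBound_of_K_ne_0 hK.ne'] at hg
  have hfδt : f δt = s (t0 + δt) - u δt := rfl
  rw [hfδt] at hg
  have hdiv : 2 * K * M * δt / K = 2 * M * δt := by field_simp
  rw [hdiv] at hg
  simp only at hg
  have hexp1 := aux_exp_sub_one_le (K * δt)
  have hmm : (0:ℝ) ≤ 2 * M * δt := by positivity
  nlinarith [Real.exp_pos (K * δt), norm_nonneg (s t0 - y),
    mul_le_mul_of_nonneg_left hexp1 hmm]

lemma aux_tsum_eq_integral {δt : ℝ} (hδt : 0 < δt) (g : ℕ → ℝ)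
    (hint : MeasureTheory.IntegrableOn (fun t => g ⌊t/δt⌋₊) (Set.Ici 0)) :
    ∑' k : ℕ, g k * δt = ∫ t in Set.Ioi (0:ℝ), g ⌊t/δt⌋₊ := by
  set S : ℕ → Set ℝ := fun k => Set.Ico ((k:ℝ)*δt) (((k:ℝ)+1)*δt) with hS
  have hmeas : ∀ k : ℕ, MeasurableSet (S k) := fun k => measurableSet_Ico
  have hU : ⋃ k : ℕ, S k = Set.Ici 0 := by
    ext x
    simp only [hS, Set.mem_iUnion, Set.mem_Ico, Set.mem_Ici]
    constructor
    · rintro ⟨k, hk1, _⟩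
      exact le_trans (by positivity) hk1
    · intro hx
      refine ⟨⌊x/δt⌋₊, ?_, ?_⟩
      · calc (⌊x/δt⌋₊ : ℝ) * δt ≤ (x/δt) * δt :=
            mul_le_mul_of_nonneg_right (Nat.floor_le (by positivity)) hδt.le
          _ = x := by field_simp
      · calc x = (x/δt) * δt := by field_simp
          _ < ((⌊x/δt⌋₊:ℝ)+1) * δt :=
            mul_lt_mul_of_pos_right (Nat.lt_floor_add_one (x/δt)) hδt
  have hdisj : Pairwise (Function.onFun Disjoint S) := by
    have key : ∀ i j : ℕ, i < j → Disjoint (S i) (S j) := by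
      intro i j hij
      apply Set.Ico_disjoint_Ico.2
      have hij' : (i:ℝ) + 1 ≤ (j:ℝ) := by exact_mod_cast hij
      calc min (((i:ℝ)+1)*δt) (((j:ℝ)+1)*δt) ≤ ((i:ℝ)+1)*δt := min_le_left _ _
        _ ≤ (j:ℝ)*δt := mul_le_mul_of_nonneg_right hij' hδt.le
        _ ≤ max ((i:ℝ)*δt) ((j:ℝ)*δt) := le_max_right _ _
    intro i j hij
    rcases hij.lt_or_gt with h | h
    · exact key i j h
    · exact (key j i h).symm
  rw [← hU] at hint
  have hiU := MeasureTheory.integral_iUnion hmeas hdisj hint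
  have hfloor : ∀ k : ℕ, ∀ x ∈ S k, ⌊x/δt⌋₊ = k := by
    intro k x hx
    obtain ⟨hx1, hx2⟩ := hx
    have h0x : (0:ℝ) ≤ x := le_trans (by positivity) hx1
    rw [Nat.floor_eq_iff (by positivity)]
    constructor
    · exact (le_div_iff₀ hδt).2 hx1
    · exact (div_lt_iff₀ hδt).2 (by linarith [hx2])
  have hpiece : ∀ k : ℕ, (∫ t in S k, g ⌊t/δt⌋₊) = g k * δt := by
    intro k
    rw [MeasureTheory.setIntegral_congr_fun (hmeas k)
      (g := fun _ => g k) (fun x hx => by rw [hfloor k x hx])]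
    rw [MeasureTheory.setIntegral_const, hS]
    rw [Real.volume_real_Ico_of_le (by nlinarith), smul_eq_mul]
    ring
  calc ∑' k : ℕ, g k * δt = ∑' k : ℕ, ∫ t in S k, g ⌊t/δt⌋₊ :=
        tsum_congr fun k => (hpiece k).symm
    _ = ∫ t in ⋃ k, S k, g ⌊t/δt⌋₊ := hiU.symm
    _ = ∫ t in Set.Ici (0:ℝ), g ⌊t/δt⌋₊ := by rw [hU]
    _ = ∫ t in Set.Ioi (0:ℝ), g ⌊t/δt⌋₊ := MeasureTheory.integral_Ici_eq_integral_Ioi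

/-- Value function convergence: under the hypotheses of the trajectory-convergence
lemma, with bounded reward `r` and `s ↦ r(s, π(s))` Lipschitz, the discretized value
`V^π_δt(s) = Σ_k γ^{kδt} r(s^k_δt, π(s^k_δt)) δt` converges to the continuous value
`V^π(s) = ∫_0^∞ γ^t r(s_t, π(s_t)) dt` as `δt → 0⁺`. -/
theorem value_function_convergence
    {n : ℕ} {A : Type*} (γ : ℝ) (hγ0 : 0 < γ) (hγ1 : γ < 1)
    (F : EuclideanSpace ℝ (Fin n) → A → EuclideanSpace ℝ (Fin n))
    (pol : EuclideanSpace ℝ (Fin n) → A) (K M : ℝ) (hK : 0 < K) (hM : 0 < M)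
    (hFbound : ∀ s a, ‖F s a‖ ≤ M)
    (hFlip : ∀ a, LipschitzWith (Real.toNNReal K) (fun s => F s a))
    (hFpollip : LipschitzWith (Real.toNNReal K) (fun s => F s (pol s)))
    (r : EuclideanSpace ℝ (Fin n) → A → ℝ)
    (Mr Lr : ℝ) (hrbound : ∀ s a, |r s a| ≤ Mr)
    (hrlip : LipschitzWith (Real.toNNReal Lr) (fun s => r s (pol s)))
    (s₀ : EuclideanSpace ℝ (Fin n))
    (s : ℝ → EuclideanSpace ℝ (Fin n)) (hs0 : s 0 = s₀)
    (hs : ∀ t : ℝ, 0 ≤ t → HasDerivAt s (F (s t) (pol (s t))) t)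
    (sd : ℝ → ℕ → EuclideanSpace ℝ (Fin n))
    (hsd0 : ∀ δt : ℝ, 0 < δt → sd δt 0 = s₀)
    (hsd : ∀ δt : ℝ, 0 < δt → ∀ k : ℕ,
      ∃ u : ℝ → EuclideanSpace ℝ (Fin n), u 0 = sd δt k ∧
        (∀ t : ℝ, 0 ≤ t → HasDerivAt u (F (u t) (pol (sd δt k))) t) ∧
        sd δt (k + 1) = u δt) :
    Tendsto (fun δt : ℝ =>
        ∑' k : ℕ, Real.exp (k * δt * Real.log γ) * r (sd δt k) (pol (sd δt k)) * δt)
      (nhdsWithin 0 (Set.Ioi 0))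
      (nhds (∫ t in Set.Ioi (0:ℝ),
        Real.exp (t * Real.log γ) * r (s t) (pol (s t)))) := by
  have hlog : Real.log γ < 0 := Real.log_neg hγ0 hγ1
  have hMr : 0 ≤ Mr := (abs_nonneg _).trans (hrbound s₀ (pol s₀))
  -- trajectory error bound
  have traj : ∀ δt : ℝ, 0 < δt → ∀ k : ℕ,
      ‖s (k * δt) - sd δt k‖ ≤ 2*M*K*δt^2 * k * Real.exp (K*(k+1)*δt) := by
    intro δt hδt k
    induction k with
    | zero => simp [hs0, hsd0 δt hδt]
    | succ k ih =>
      obtain ⟨u, hu0, huderiv, hunext⟩ := hsd δt hδt k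
      have hstep := aux_step F pol K M hK hM hFbound hFlip hFpollip s hs hδt
        (t0 := (k:ℝ) * δt) (by positivity) u (sd δt k) hu0 huderiv
      rw [← hunext] at hstep
      have hcast : ((k+1 : ℕ) : ℝ) * δt = (k:ℝ) * δt + δt := by push_cast; ring
      rw [hcast]
      have h1 : Real.exp (K*δt) * Real.exp (K*((k:ℝ)+1)*δt) = Real.exp (K*((k:ℝ)+1+1)*δt) := by
        rw [← Real.exp_add]; ring_nf
      have h2 : Real.exp (K*δt) ≤ Real.exp (K*((k:ℝ)+1+1)*δt) := by
        apply Real.exp_le_exp.2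
        have h0 : (0:ℝ) ≤ K * ((k:ℝ)+1) * δt := by positivity
        nlinarith
      have hX : (0:ℝ) ≤ 2*M*K*δt^2 := by positivity
      push_cast
      calc ‖s ((k:ℝ)*δt + δt) - sd δt (k+1)‖
          ≤ Real.exp (K*δt) * (‖s ((k:ℝ)*δt) - sd δt k‖ + 2*M*K*δt^2) := hstep
        _ ≤ Real.exp (K*δt) * (2*M*K*δt^2 * (k:ℝ) * Real.exp (K*((k:ℝ)+1)*δt) + 2*M*K*δt^2) := by
            apply mul_le_mul_of_nonneg_left _ (Real.exp_pos _).le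
            linarith
        _ = 2*M*K*δt^2 * (k:ℝ) * (Real.exp (K*δt) * Real.exp (K*((k:ℝ)+1)*δt))
              + 2*M*K*δt^2 * Real.exp (K*δt) := by ring
        _ ≤ 2*M*K*δt^2 * (k:ℝ) * Real.exp (K*((k:ℝ)+1+1)*δt)
              + 2*M*K*δt^2 * Real.exp (K*((k:ℝ)+1+1)*δt) := by
            rw [h1]
            have := mul_le_mul_of_nonneg_left h2 hX
            linarith
        _ = 2*M*K*δt^2 * ((k:ℝ)+1) * Real.exp (K*((k:ℝ)+1+1)*δt) := by ring
  -- pointwise trajectory convergence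
  have trajpt : ∀ t : ℝ, 0 < t →
      Tendsto (fun δt => sd δt ⌊t/δt⌋₊) (nhdsWithin (0:ℝ) (Set.Ioi 0)) (nhds (s t)) := by
    intro t ht
    rw [tendsto_iff_norm_sub_tendsto_zero]
    set C := M + 2*M*K*t*Real.exp (K*(t+1)) with hCdef
    have hC : Tendsto (fun δt : ℝ => C * δt) (nhdsWithin (0:ℝ) (Set.Ioi 0)) (nhds 0) := by
      have h' : Tendsto (fun δt : ℝ => C * δt) (nhds 0) (nhds (C * 0)) :=
        tendsto_id.const_mul C
      simpa using h'.mono_left nhdsWithin_le_nhds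
    apply squeeze_zero' (Eventually.of_forall fun δt => norm_nonneg _) _ hC
    filter_upwards [Ioo_mem_nhdsGT (zero_lt_one (α := ℝ))] with δt hδt
    obtain ⟨h0, h1⟩ := hδt
    set k := ⌊t/δt⌋₊ with hk
    have hq0 : 0 ≤ t / δt := by positivity
    have hk1 : (k:ℝ) * δt ≤ t := by
      have h' := Nat.floor_le hq0
      calc (k:ℝ)*δt ≤ (t/δt)*δt := mul_le_mul_of_nonneg_right h' h0.le
        _ = t := by field_simp
    have hk2 : t < ((k:ℝ)+1) * δt := by
      have h' := Nat.lt_floor_add_one (t/δt)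
      calc t = (t/δt)*δt := by field_simp
        _ < ((k:ℝ)+1)*δt := mul_lt_mul_of_pos_right h' h0
    have e1 : ‖s t - s ((k:ℝ)*δt)‖ ≤ M * δt := by
      have h' := aux_speed hs (fun τ _ => hFbound _ _) (t1 := (k:ℝ)*δt) (t2 := t)
        (by positivity) ht.le
      calc ‖s t - s ((k:ℝ)*δt)‖ ≤ M * |t - (k:ℝ)*δt| := h'
        _ ≤ M * δt := by
            rw [abs_of_nonneg (by linarith)]
            apply mul_le_mul_of_nonneg_left _ hM.le
            linarith
    have e2 := traj δt h0 k
    have e3 : 2*M*K*δt^2*(k:ℝ)*Real.exp (K*((k:ℝ)+1)*δt)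
        ≤ 2*M*K*t*Real.exp (K*(t+1)) * δt := by
      have hexp : Real.exp (K*((k:ℝ)+1)*δt) ≤ Real.exp (K*(t+1)) := by
        apply Real.exp_le_exp.2
        have hkk1 : ((k:ℝ)+1)*δt ≤ t + 1 := by nlinarith
        nlinarith
      have hmm := mul_le_mul hk1 hexp (Real.exp_pos _).le ht.le
      calc 2*M*K*δt^2*(k:ℝ)*Real.exp (K*((k:ℝ)+1)*δt)
          = 2*M*K*(((k:ℝ)*δt)*Real.exp (K*((k:ℝ)+1)*δt))*δt := by ring
        _ ≤ 2*M*K*(t*Real.exp (K*(t+1)))*δt := by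
            apply mul_le_mul_of_nonneg_right _ h0.le
            apply mul_le_mul_of_nonneg_left hmm (by positivity)
        _ = 2*M*K*t*Real.exp (K*(t+1)) * δt := by ring
    calc ‖sd δt k - s t‖ ≤ ‖sd δt k - s ((k:ℝ)*δt)‖ + ‖s ((k:ℝ)*δt) - s t‖ :=
          norm_sub_le_norm_sub_add_norm_sub _ _ _
      _ = ‖s ((k:ℝ)*δt) - sd δt k‖ + ‖s t - s ((k:ℝ)*δt)‖ := by
          rw [norm_sub_rev (sd δt k) (s ((k:ℝ)*δt)), norm_sub_rev (s ((k:ℝ)*δt)) (s t)]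
      _ ≤ 2*M*K*δt^2*(k:ℝ)*Real.exp (K*((k:ℝ)+1)*δt) + M * δt := add_le_add e2 e1
      _ ≤ 2*M*K*t*Real.exp (K*(t+1)) * δt + M * δt := by linarith
      _ = C * δt := by rw [hCdef]; ring
  -- the discretized integrand
  set G : ℝ → ℕ → ℝ :=
    fun δt k => Real.exp ((k:ℝ) * δt * Real.log γ) * r (sd δt k) (pol (sd δt k)) with hG
  have hGmeas : ∀ δt : ℝ, Measurable (fun t : ℝ => G δt ⌊t/δt⌋₊) :=
    fun δt => (measurable_of_countable (G δt)).comp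
      (Nat.measurable_floor.comp (measurable_id.div_const δt))
  set bound : ℝ → ℝ := fun t => Mr / γ * Real.exp (t * Real.log γ) with hbd
  have hboundint : MeasureTheory.IntegrableOn bound (Set.Ioi (0:ℝ)) := by
    have h1 : MeasureTheory.IntegrableOn (fun x : ℝ => Real.exp (-(-Real.log γ) * x))
        (Set.Ioi (0:ℝ)) := exp_neg_integrableOn_Ioi 0 (by linarith)
    have h2 : (fun x : ℝ => Real.exp (-(-Real.log γ) * x))
        = fun x : ℝ => Real.exp (x * Real.log γ) := by
      funext x; ring_nf
    rw [h2] at h1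
    exact h1.const_mul _
  -- the pointwise domination
  have hdom : ∀ δt : ℝ, 0 < δt → δt < 1 → ∀ t : ℝ, 0 ≤ t →
      |G δt ⌊t/δt⌋₊| ≤ bound t := by
    intro δt h0 h1 t ht
    set k := ⌊t/δt⌋₊ with hk
    have hk2 : t < ((k:ℝ)+1) * δt := by
      have h' := Nat.lt_floor_add_one (t/δt)
      calc t = (t/δt)*δt := by field_simp
        _ < ((k:ℝ)+1)*δt := mul_lt_mul_of_pos_right h' h0
    have hge : t - 1 ≤ (k:ℝ) * δt := by nlinarith [Nat.cast_nonneg (α := ℝ) k]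
    have hexp : Real.exp ((k:ℝ) * δt * Real.log γ) ≤ Real.exp ((t - 1) * Real.log γ) := by
      apply Real.exp_le_exp.2
      nlinarith
    have hexpval : Real.exp ((t - 1) * Real.log γ)
        = Real.exp (t * Real.log γ) / γ := by
      rw [eq_div_iff hγ0.ne']
      rw [← Real.exp_log hγ0]
      rw [← Real.exp_add]
      congr 1
      rw [Real.exp_log hγ0]  -- undo? careful
      ring
    calc |G δt k| = Real.exp ((k:ℝ) * δt * Real.log γ) * |r (sd δt k) (pol (sd δt k))| := by
          rw [hG]; rw [abs_mul, Real.abs_exp]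
      _ ≤ Real.exp ((t - 1) * Real.log γ) * Mr := by
          apply mul_le_mul hexp (hrbound _ _) (abs_nonneg _) (Real.exp_pos _).le
      _ = bound t := by rw [hbd, hexpval]; field_simp
  -- integrability of the step functions
  have hGint : ∀ δt : ℝ, 0 < δt → δt < 1 →
      MeasureTheory.IntegrableOn (fun t : ℝ => G δt ⌊t/δt⌋₊) (Set.Ici 0) := by
    intro δt h0 h1
    have hbint : MeasureTheory.IntegrableOn bound (Set.Ici (0:ℝ)) :=
      (integrableOn_Ici_iff_integrableOn_Ioi (f := bound) (b := 0)).2 hboundint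
    apply MeasureTheory.Integrable.mono' hbint ((hGmeas δt).aestronglyMeasurable)
    rw [MeasureTheory.ae_restrict_iff' measurableSet_Ici]
    apply MeasureTheory.ae_of_all
    intro t ht
    rw [Real.norm_eq_abs]
    exact hdom δt h0 h1 t ht
  -- dominated convergence
  have key : Tendsto (fun δt : ℝ => ∫ t in Set.Ioi (0:ℝ), G δt ⌊t/δt⌋₊)
      (nhdsWithin (0:ℝ) (Set.Ioi 0))
      (nhds (∫ t in Set.Ioi (0:ℝ), Real.exp (t * Real.log γ) * r (s t) (pol (s t)))) := by
    apply MeasureTheory.tendsto_integral_filter_of_dominated_convergence bound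
    · exact Eventually.of_forall fun δt => ((hGmeas δt).aestronglyMeasurable)
    · filter_upwards [Ioo_mem_nhdsGT (zero_lt_one (α := ℝ))] with δt hδt
      rw [MeasureTheory.ae_restrict_iff' measurableSet_Ioi]
      apply MeasureTheory.ae_of_all
      intro t ht
      rw [Real.norm_eq_abs]
      exact hdom δt hδt.1 hδt.2 t (le_of_lt ht)
    · exact hboundint
    · rw [MeasureTheory.ae_restrict_iff' measurableSet_Ioi]
      apply MeasureTheory.ae_of_all
      intro t ht
      have htpos : (0:ℝ) < t := ht
      -- floor times δt tends to t
      have hfl : Tendsto (fun δt : ℝ => (⌊t/δt⌋₊ : ℝ) * δt)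
          (nhdsWithin (0:ℝ) (Set.Ioi 0)) (nhds t) := by
        have hlow : Tendsto (fun δt : ℝ => t - δt) (nhdsWithin (0:ℝ) (Set.Ioi 0)) (nhds t) := by
          have h' : Tendsto (fun δt : ℝ => t - δt) (nhds 0) (nhds (t - 0)) :=
            tendsto_const_nhds.sub tendsto_id
          simpa using h'.mono_left nhdsWithin_le_nhds
        apply tendsto_of_tendsto_of_tendsto_of_le_of_le' hlow tendsto_const_nhds
        · filter_upwards [self_mem_nhdsWithin] with δt h0
          have h0 : (0:ℝ) < δt := h0
          have h' := Nat.lt_floor_add_one (t/δt)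
          have : t < ((⌊t/δt⌋₊:ℝ)+1)*δt := by
            calc t = (t/δt)*δt := by field_simp
              _ < ((⌊t/δt⌋₊:ℝ)+1)*δt := mul_lt_mul_of_pos_right h' h0
          linarith [this]
        · filter_upwards [self_mem_nhdsWithin] with δt h0
          have h0 : (0:ℝ) < δt := h0
          calc (⌊t/δt⌋₊:ℝ)*δt ≤ (t/δt)*δt :=
              mul_le_mul_of_nonneg_right (Nat.floor_le (by positivity)) h0.le
            _ = t := by field_simp
      have hexp : Tendsto (fun δt : ℝ => Real.exp ((⌊t/δt⌋₊ : ℝ) * δt * Real.log γ))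
          (nhdsWithin (0:ℝ) (Set.Ioi 0)) (nhds (Real.exp (t * Real.log γ))) :=
        (Real.continuous_exp.tendsto _).comp (hfl.mul_const _)
      have hr : Tendsto (fun δt : ℝ => r (sd δt ⌊t/δt⌋₊) (pol (sd δt ⌊t/δt⌋₊)))
          (nhdsWithin (0:ℝ) (Set.Ioi 0)) (nhds (r (s t) (pol (s t)))) :=
        (hrlip.continuous.tendsto (s t)).comp (trajpt t htpos)
      exact hexp.mul hr
  apply key.congr'
  filter_upwards [Ioo_mem_nhdsGT (zero_lt_one (α := ℝ))] with δt hδt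
  exact (aux_tsum_eq_integral hδt.1 (G δt) (hGint δt hδt.1 hδt.2)).symm
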